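/- Let d ≥ 1 and n ≥ 1, and let M be any ZMod d-submodule of the discrete phase space V. Then the double symplectic complement satisfies (M^ω)^ω = M. -/

import Mathlib

open scoped BigOperators
open ComplexOrder

/-- The discrete phase space for `n` particles with local dimension `d`. -/
abbrev PhaseSpace (d n : ℕ) : Type := (Fin n → ZMod d) × (Fin n → ZMod d)

/-- The symplectic form on the discrete phase space. -/
def symp {d n : ℕ} (v w : PhaseSpace d n) : ZMod d :=
  ∑ i, (v.1 i * w.2 i - v.2 i * w.1 i)

lemma symp_add_left {d n : ℕ} (a b w : PhaseSpace d n) :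
    symp (a + b) w = symp a w + symp b w := by
  simp only [symp, Prod.fst_add, Prod.snd_add, Pi.add_apply, ← Finset.sum_add_distrib]
  exact Finset.sum_congr rfl fun i _ => by ring

lemma symp_smul_left {d n : ℕ} (c : ZMod d) (a w : PhaseSpace d n) :
    symp (c • a) w = c * symp a w := by
  simp only [symp, Prod.smul_fst, Prod.smul_snd, Pi.smul_apply, smul_eq_mul, Finset.mul_sum]
  exact Finset.sum_congr rfl fun i _ => by ring

/-- The symplectic complement `M^ω` of a submodule of phase space. -/
def sympCompl {d n : ℕ} (M : Submodule (ZMod d) (PhaseSpace d n)) :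
    Submodule (ZMod d) (PhaseSpace d n) where
  carrier := {v | ∀ m ∈ M, symp v m = 0}
  zero_mem' := by
    intro m _
    simp [symp]
  add_mem' := by
    intro a b ha hb m hm
    rw [Set.mem_setOf_eq] at ha hb
    show symp _ m = 0
    rw [symp_add_left, ha m hm, hb m hm, add_zero]
  smul_mem' := by
    intro c a ha m hm
    rw [Set.mem_setOf_eq] at ha
    show symp _ m = 0
    rw [symp_smul_left, ha m hm, mul_zero]


lemma cyclic_sep {d k : ℕ} (hd : d ≠ 0) (hk : k ∣ d) {a : ZMod k} (ha : a ≠ 0) :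
    ∃ φ : ZMod k →+ ZMod d, φ a ≠ 0 := by
  obtain ⟨c, hc⟩ := hk
  have hk0 : k ≠ 0 := fun h => hd (by simp [hc, h])
  have hc0 : c ≠ 0 := fun h => hd (by simp [hc, h])
  set f : ℤ →+ ZMod d := (Int.castAddHom (ZMod d)).comp (AddMonoidHom.mulRight (c : ℤ)) with hf
  have hfk : f (k : ℤ) = 0 := by
    simp only [hf, AddMonoidHom.comp_apply, AddMonoidHom.mulRight_apply, Int.coe_castAddHom]
    rw [show ((k : ℤ) * c) = ((d : ℕ) : ℤ) by push_cast [hc]; ring]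
    simp [ZMod.intCast_zmod_eq_zero_iff_dvd]
  refine ⟨ZMod.lift k ⟨f, hfk⟩, ?_⟩
  have hinj : Function.Injective (ZMod.lift k ⟨f, hfk⟩) := by
    rw [ZMod.lift_injective]
    intro m hm
    simp only [hf, AddMonoidHom.comp_apply, AddMonoidHom.mulRight_apply, Int.coe_castAddHom,
      ZMod.intCast_zmod_eq_zero_iff_dvd] at hm
    rw [ZMod.intCast_zmod_eq_zero_iff_dvd]
    have : (k : ℤ) * c ∣ m * c := by rwa [show ((k : ℤ) * c) = ((d : ℕ) : ℤ) by push_cast [hc]; ring]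
    exact_mod_cast (mul_dvd_mul_iff_right (by exact_mod_cast hc0 : (c : ℤ) ≠ 0)).mp this
  intro h
  exact ha (hinj (by simpa using h))
lemma group_sep {d : ℕ} (hd : d ≠ 0) {N : Type*} [AddCommGroup N] [Finite N]
    (hN : ∀ x : N, d • x = 0) {x : N} (hx : x ≠ 0) :
    ∃ φ : N →+ ZMod d, φ x ≠ 0 := by
  classical
  obtain ⟨ι, _, m, hlt, ⟨e⟩⟩ := AddCommGroup.equiv_directSum_zmod_of_finite' N
  have hdvd : ∀ i, m i ∣ d := by
    intro i
    have : NeZero (m i) := ⟨by have := hlt i; omega⟩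
    have h1 : DirectSum.of (fun i => ZMod (m i)) i (d • (1 : ZMod (m i))) = 0 := by
      rw [map_nsmul]
      have := hN (e.symm (DirectSum.of (fun i => ZMod (m i)) i 1))
      have h2 := congrArg e this
      rwa [map_nsmul, e.apply_symm_apply, map_zero] at h2
    have h3 := congrArg (fun f => f i) h1
    simp only [DirectSum.of_eq_same, DirectSum.zero_apply] at h3
    have h4 : (d : ZMod (m i)) = 0 := by rwa [nsmul_eq_mul, mul_one] at h3
    exact (ZMod.natCast_eq_zero_iff _ _).mp h4
  have hex : e x ≠ 0 := fun h => hx (by simpa using congrArg e.symm h)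
  obtain ⟨i, hi⟩ : ∃ i, (e x) i ≠ 0 := by
    by_contra h
    push_neg at h
    exact hex (DFinsupp.ext h)
  obtain ⟨φi, hφi⟩ := cyclic_sep hd (hdvd i) hi
  exact ⟨(φi.comp (DFinsupp.evalAddMonoidHom i)).comp e.toAddMonoidHom, by exact hφi⟩

lemma symp_antisymm {d n : ℕ} (v w : PhaseSpace d n) : symp v w = - symp w v := by
  simp only [symp, ← Finset.sum_neg_distrib]
  exact Finset.sum_congr rfl fun i _ => by ring

lemma symp_repr {d n : ℕ} (φ : PhaseSpace d n →ₗ[ZMod d] ZMod d) :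
    ∃ w : PhaseSpace d n, ∀ u, symp w u = φ u := by
  classical
  refine ⟨(fun i => φ (0, Pi.single i 1), fun i => -φ (Pi.single i 1, 0)), fun u => ?_⟩
  have hu : u = ∑ i, (u.1 i • ((Pi.single i 1 : Fin n → ZMod d), (0 : Fin n → ZMod d))
      + u.2 i • ((0 : Fin n → ZMod d), (Pi.single i 1 : Fin n → ZMod d))) := by
    ext j
    · simp [Prod.fst_sum, Finset.sum_apply, Pi.single_apply, Finset.sum_ite_eq', mul_comm]
    · simp [Prod.snd_sum, Finset.sum_apply, Pi.single_apply, Finset.sum_ite_eq', mul_comm]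
  conv_rhs => rw [hu]
  rw [map_sum]
  simp only [map_add, map_smul, smul_eq_mul, symp]
  exact Finset.sum_congr rfl fun i _ => by ring

theorem stmt2 (d n : ℕ) (hd : 1 ≤ d) (hn : 1 ≤ n)
    (M : Submodule (ZMod d) (PhaseSpace d n)) :
    sympCompl (sympCompl M) = M := by
  have : NeZero d := ⟨by omega⟩
  have hV : ∀ y : PhaseSpace d n, d • y = 0 := fun y => by
    rw [← Nat.cast_smul_eq_nsmul (ZMod d), ZMod.natCast_self, zero_smul]
  refine le_antisymm ?_ ?_
  · intro v hv
    by_contra hvM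
    have hfin : Finite (PhaseSpace d n ⧸ M) := Quotient.finite _
    have htor : ∀ x : PhaseSpace d n ⧸ M, d • x = 0 := by
      intro x
      obtain ⟨y, rfl⟩ := M.mkQ_surjective x
      rw [← map_nsmul, hV y, map_zero]
    have hx : (M.mkQ v : PhaseSpace d n ⧸ M) ≠ 0 := by
      rw [Submodule.mkQ_apply, Ne, Submodule.Quotient.mk_eq_zero]; exact hvM
    obtain ⟨φ0, hφ0⟩ := group_sep (d := d) (by omega) htor hx
    set φ : PhaseSpace d n →ₗ[ZMod d] ZMod d :=
      (φ0.comp M.mkQ.toAddMonoidHom).toZModLinearMap d with hφ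
    obtain ⟨w, hw⟩ := symp_repr φ
    have hwM : w ∈ sympCompl M := by
      intro m hm
      rw [hw]
      show φ0 (M.mkQ m) = 0
      rw [Submodule.mkQ_apply, (Submodule.Quotient.mk_eq_zero M).mpr hm, map_zero]
    have h0 := hv w hwM
    rw [symp_antisymm, hw, neg_eq_zero] at h0
    exact hφ0 h0
  · intro m hm w hw
    rw [symp_antisymm, hw m hm, neg_zero]
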